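/- For all integers m, n ≥ 1, 2/sqrt(n*(m+n)) < (Γ(n/2)*Γ((m+n)/2)) / (Γ((n+1)/2)*Γ((m+n+1)/2)) < 2/sqrt((n - 1/2)*(m + n - 1/2)). -/

import Mathlib

open Real Filter Topology
open scoped Nat

noncomputable def qW (j : ℕ) : ℝ := (2 * j + 1) * Real.Wallis.W j

lemma qW_pos (j : ℕ) : 0 < qW j := mul_pos (by positivity) (Real.Wallis.W_pos j)

lemma qW_zero : qW 0 = 1 := by simp [qW, Real.Wallis.W]

lemma qW_succ (j : ℕ) : qW (j+1) = qW j * ((2*(j:ℝ)+2)/(2*(j:ℝ)+1))^2 := by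
  unfold qW
  rw [Real.Wallis.W_succ]
  have h1 : (2*(j:ℝ)+1) ≠ 0 := by positivity
  have h3 : (2*(j:ℝ)+3) ≠ 0 := by positivity
  push_cast
  field_simp
  ring

noncomputable def aW (j : ℕ) : ℝ := qW j / ((j:ℝ) + 1/4)
noncomputable def bW (j : ℕ) : ℝ := qW j * ((j:ℝ) - 1/4) / (j:ℝ)^2

lemma aW_anti : StrictAnti aW := by
  apply strictAnti_nat_of_succ_lt
  intro j
  unfold aW
  rw [qW_succ]
  have hq := qW_pos j
  have h1 : (0:ℝ) < 2*(j:ℝ)+1 := by positivity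
  have h2 : (0:ℝ) < (j:ℝ) + 1/4 := by positivity
  push_cast
  rw [div_lt_div_iff₀ (by positivity) h2]
  have key : ((2*(j:ℝ)+2)/(2*(j:ℝ)+1))^2 * ((j:ℝ)+1/4) < ((j:ℝ)+1+1/4) := by
    rw [div_pow, div_mul_eq_mul_div, div_lt_iff₀ (by positivity)]
    nlinarith [sq_nonneg ((j:ℝ))]
  nlinarith [key, hq]

lemma bW_mono : StrictMono bW := by
  apply strictMono_nat_of_lt_succ
  intro j
  rcases Nat.eq_zero_or_pos j with rfl | hj
  · unfold bW
    norm_num [qW_zero, qW_succ]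
  · unfold bW
    rw [qW_succ]
    have hq := qW_pos j
    have hj1 : (1:ℝ) ≤ (j:ℝ) := by exact_mod_cast hj
    have h1 : (0:ℝ) < 2*(j:ℝ)+1 := by positivity
    have h21 : (2*(j:ℝ)+1) ≠ 0 := by positivity
    have hjne : (j:ℝ) ≠ 0 := by positivity
    push_cast
    rw [div_lt_div_iff₀ (by positivity) (by positivity)]
    have key : ((j:ℝ) - 1/4) * (((j:ℝ)+1)^2) * (2*(j:ℝ)+1)^2 < ((2*(j:ℝ)+2))^2 * (((j:ℝ)+1-1/4) * (j:ℝ)^2) := by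
      nlinarith [hj1]
    have key2 := mul_lt_mul_of_pos_left key hq
    have e : qW j * ((2 * (j:ℝ) + 2) / (2 * (j:ℝ) + 1)) ^ 2 * ((j:ℝ) + 1 - 1 / 4) * (j:ℝ) ^ 2
        = (qW j * ((2 * (j:ℝ) + 2) ^ 2 * (((j:ℝ) + 1 - 1 / 4) * (j:ℝ) ^ 2)))/(2*(j:ℝ)+1)^2 := by
      field_simp
    rw [e, lt_div_iff₀ (by positivity)]
    nlinarith [key2]

lemma aW_tendsto : Tendsto aW atTop (𝓝 π) := by
  have h0 : Tendsto (fun j:ℕ => ((j:ℝ)+1/4)⁻¹) atTop (𝓝 0) :=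
    Tendsto.inv_tendsto_atTop (tendsto_atTop_add_const_right _ _ tendsto_natCast_atTop_atTop)
  have h1 : Tendsto (fun j:ℕ => 2 + (1/2)*((j:ℝ)+1/4)⁻¹) atTop (𝓝 2) := by
    have := (h0.const_mul (1/2:ℝ)).const_add 2
    simpa using this
  have h2 := (Real.Wallis.tendsto_W_nhds_pi_div_two).mul h1
  have he : ∀ j : ℕ, Real.Wallis.W j * (2 + (1/2)*((j:ℝ)+1/4)⁻¹) = aW j := by
    intro j
    have : ((j:ℝ)+1/4) ≠ 0 := by positivity
    unfold aW qW
    field_simp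
    ring
  have h3 : Tendsto aW atTop (𝓝 (π/2*2)) := h2.congr he
  simpa using h3

lemma bW_tendsto : Tendsto bW atTop (𝓝 π) := by
  have h0 : Tendsto (fun j:ℕ => ((j:ℝ))⁻¹) atTop (𝓝 0) :=
    Tendsto.inv_tendsto_atTop tendsto_natCast_atTop_atTop
  have h1 : Tendsto (fun j:ℕ => 2 + (1/2)*((j:ℝ))⁻¹ - (1/4)*((j:ℝ)⁻¹)^2) atTop (𝓝 2) := by
    have := ((h0.const_mul (1/2:ℝ)).const_add 2).sub ((h0.pow 2).const_mul (1/4:ℝ))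
    simpa using this
  have h2 := (Real.Wallis.tendsto_W_nhds_pi_div_two).mul h1
  have he : ∀ᶠ j : ℕ in atTop,
      Real.Wallis.W j * (2 + (1/2)*((j:ℝ))⁻¹ - (1/4)*((j:ℝ)⁻¹)^2) = bW j := by
    filter_upwards [eventually_ge_atTop 1] with j hj
    have : ((j:ℝ)) ≠ 0 := by positivity
    unfold bW qW
    field_simp
    ring
  have h3 : Tendsto bW atTop (𝓝 (π/2*2)) := h2.congr' he
  simpa using h3

lemma qW_gt (j : ℕ) : π * ((j:ℝ) + 1/4) < qW j := by
  have h1 : π ≤ aW (j+1) := aW_anti.antitone.le_of_tendsto aW_tendsto (j+1)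
  have h3 : π < aW j := lt_of_le_of_lt h1 (aW_anti (Nat.lt_succ_self j))
  unfold aW at h3
  rw [lt_div_iff₀ (by positivity)] at h3
  linarith

lemma qW_lt (j : ℕ) (hj : 1 ≤ j) : qW j * ((j:ℝ) - 1/4) < π * (j:ℝ)^2 := by
  have h1 : bW (j+1) ≤ π := bW_mono.monotone.ge_of_tendsto bW_tendsto (j+1)
  have h3 : bW j < π := lt_of_lt_of_le (bW_mono (Nat.lt_succ_self j)) h1
  unfold bW at h3
  have hjp : (0:ℝ) < (j:ℝ)^2 := by
    have : (0:ℝ) < (j:ℝ) := by exact_mod_cast hj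
    positivity
  rw [div_lt_iff₀ hjp] at h3
  linarith

lemma gamma_half_sq (j : ℕ) : qW j * Real.Gamma ((j:ℝ) + 1/2)^2 = π * (j ! : ℝ)^2 := by
  induction j with
  | zero =>
    simp only [Nat.cast_zero, zero_add, Nat.factorial_zero, Nat.cast_one, one_pow, mul_one, qW_zero]
    rw [Real.Gamma_one_half_eq, one_mul, sq_sqrt pi_pos.le]
  | succ j ih =>
    have h21 : (2*(j:ℝ)+1) ≠ 0 := by positivity
    have hpos : (0:ℝ) < (j:ℝ) + 1/2 := by positivity
    rw [qW_succ]
    push_cast [Nat.factorial_succ]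
    rw [show ((j:ℝ) + 1 + 1/2) = ((j:ℝ)+1/2)+1 by ring, Real.Gamma_add_one hpos.ne']
    have key : ((2*(j:ℝ)+2)/(2*(j:ℝ)+1))^2 * ((j:ℝ)+1/2)^2 = ((j:ℝ)+1)^2 := by
      field_simp
    calc qW j * ((2*(j:ℝ)+2)/(2*(j:ℝ)+1))^2 * (((j:ℝ)+1/2) * Real.Gamma ((j:ℝ)+1/2))^2
        = (qW j * Real.Gamma ((j:ℝ)+1/2)^2) * (((2*(j:ℝ)+2)/(2*(j:ℝ)+1))^2 * ((j:ℝ)+1/2)^2) := by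
          ring
      _ = π * (j ! : ℝ)^2 * ((j:ℝ)+1)^2 := by rw [ih, key]
      _ = π * (((j:ℝ)+1) * (j ! : ℝ))^2 := by ring

lemma key_upper (k : ℕ) (hk : 1 ≤ k) :
    Real.Gamma (((k:ℝ)+1)/2)^2 < ((k:ℝ)/2) * Real.Gamma ((k:ℝ)/2)^2 := by
  have hq : ∀ j : ℕ, (0:ℝ) < qW j := qW_pos
  rcases Nat.even_or_odd k with ⟨j, rfl⟩ | ⟨j, rfl⟩
  · -- k = j + j
    have hj : 1 ≤ j := by omega
    have hj1 : (1:ℝ) ≤ (j:ℝ) := by exact_mod_cast hj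
    have hjne : (j:ℝ) ≠ 0 := by positivity
    have hfac : (0:ℝ) < (j ! : ℝ) := by exact_mod_cast j.factorial_pos
    have e1 : ((j + j : ℕ):ℝ)/2 = (j:ℝ) := by push_cast; ring
    have e2 : (((j + j : ℕ):ℝ)+1)/2 = (j:ℝ) + 1/2 := by push_cast; ring
    rw [e1, e2]
    have hgj : (j:ℝ) * Real.Gamma (j:ℝ) = (j ! : ℝ) := by
      rw [← Real.Gamma_add_one hjne, Real.Gamma_nat_eq_factorial]
    have hG2 : Real.Gamma ((j:ℝ)+1/2)^2 = π * (j ! : ℝ)^2 / qW j := by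
      rw [eq_div_iff (hq j).ne']
      linarith [gamma_half_sq j]
    have hgsq : Real.Gamma (j:ℝ)^2 = (j ! : ℝ)^2 / (j:ℝ)^2 := by
      rw [eq_div_iff (by positivity)]
      linear_combination ((j:ℝ) * Real.Gamma (j:ℝ) + (j ! : ℝ)) * hgj
    rw [hG2, hgsq]
    have e3 : (j:ℝ) * ((j ! : ℝ)^2 / (j:ℝ)^2) = (j ! : ℝ)^2 / (j:ℝ) := by
      field_simp
    rw [e3, div_lt_div_iff₀ (hq j) (by positivity)]
    have hπ : π * (j:ℝ) < qW j := by nlinarith [qW_gt j, pi_pos]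
    nlinarith [mul_lt_mul_of_pos_right hπ (pow_pos hfac 2)]
  · -- k = 2 * j + 1
    have hfac : (0:ℝ) < (j ! : ℝ) := by exact_mod_cast j.factorial_pos
    have e1 : ((2 * j + 1 : ℕ):ℝ)/2 = (j:ℝ) + 1/2 := by push_cast; ring
    have e2 : (((2 * j + 1 : ℕ):ℝ)+1)/2 = (j:ℝ) + 1 := by push_cast; ring
    rw [e1, e2]
    have hΓ1 : Real.Gamma ((j:ℝ)+1) = (j ! : ℝ) := Real.Gamma_nat_eq_factorial j
    have hG2 : Real.Gamma ((j:ℝ)+1/2)^2 = π * (j ! : ℝ)^2 / qW j := by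
      rw [eq_div_iff (hq j).ne']
      linarith [gamma_half_sq j]
    have hq2 : qW j < π * ((j:ℝ) + 1/2) := by
      rcases Nat.eq_zero_or_pos j with rfl | hj
      · rw [qW_zero]; push_cast; nlinarith [pi_gt_three]
      · have hj1 : (1:ℝ) ≤ (j:ℝ) := by exact_mod_cast hj
        nlinarith [qW_lt j hj, pi_pos]
    rw [hΓ1, hG2]
    have e3 : ((j:ℝ) + 1/2) * (π * (j ! : ℝ)^2 / qW j) = (((j:ℝ)+1/2) * π * (j ! : ℝ)^2) / qW j := by
      ring
    rw [e3, lt_div_iff₀ (hq j)]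
    nlinarith [mul_lt_mul_of_pos_right hq2 (pow_pos hfac 2)]

lemma key_lower (k : ℕ) (hk : 1 ≤ k) :
    ((k:ℝ)/2 - 1/4) * Real.Gamma ((k:ℝ)/2)^2 < Real.Gamma (((k:ℝ)+1)/2)^2 := by
  have hq : ∀ j : ℕ, (0:ℝ) < qW j := qW_pos
  rcases Nat.even_or_odd k with ⟨j, rfl⟩ | ⟨j, rfl⟩
  · have hj : 1 ≤ j := by omega
    have hj1 : (1:ℝ) ≤ (j:ℝ) := by exact_mod_cast hj
    have hjne : (j:ℝ) ≠ 0 := by positivity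
    have hfac : (0:ℝ) < (j ! : ℝ) := by exact_mod_cast j.factorial_pos
    have e1 : ((j + j : ℕ):ℝ)/2 = (j:ℝ) := by push_cast; ring
    have e2 : (((j + j : ℕ):ℝ)+1)/2 = (j:ℝ) + 1/2 := by push_cast; ring
    rw [e1, e2]
    have hgj : (j:ℝ) * Real.Gamma (j:ℝ) = (j ! : ℝ) := by
      rw [← Real.Gamma_add_one hjne, Real.Gamma_nat_eq_factorial]
    have hG2 : Real.Gamma ((j:ℝ)+1/2)^2 = π * (j ! : ℝ)^2 / qW j := by
      rw [eq_div_iff (hq j).ne']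
      linarith [gamma_half_sq j]
    have hgsq : Real.Gamma (j:ℝ)^2 = (j ! : ℝ)^2 / (j:ℝ)^2 := by
      rw [eq_div_iff (by positivity)]
      linear_combination ((j:ℝ) * Real.Gamma (j:ℝ) + (j ! : ℝ)) * hgj
    rw [hG2, hgsq]
    have e3 : ((j:ℝ) - 1/4) * ((j ! : ℝ)^2 / (j:ℝ)^2) = (((j:ℝ) - 1/4) * (j ! : ℝ)^2) / (j:ℝ)^2 := by
      ring
    rw [e3, div_lt_div_iff₀ (by positivity) (hq j)]
    nlinarith [mul_lt_mul_of_pos_right (qW_lt j hj) (pow_pos hfac 2)]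
  · have hfac : (0:ℝ) < (j ! : ℝ) := by exact_mod_cast j.factorial_pos
    have e1 : ((2 * j + 1 : ℕ):ℝ)/2 = (j:ℝ) + 1/2 := by push_cast; ring
    have e2 : (((2 * j + 1 : ℕ):ℝ)+1)/2 = (j:ℝ) + 1 := by push_cast; ring
    rw [e1, e2]
    have hΓ1 : Real.Gamma ((j:ℝ)+1) = (j ! : ℝ) := Real.Gamma_nat_eq_factorial j
    have hG2 : Real.Gamma ((j:ℝ)+1/2)^2 = π * (j ! : ℝ)^2 / qW j := by
      rw [eq_div_iff (hq j).ne']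
      linarith [gamma_half_sq j]
    rw [hΓ1, hG2]
    have e3 : ((j:ℝ) + 1/2 - 1/4) * (π * (j ! : ℝ)^2 / qW j)
        = (((j:ℝ)+1/4) * π * (j ! : ℝ)^2) / qW j := by ring
    rw [e3, div_lt_iff₀ (hq j)]
    nlinarith [mul_lt_mul_of_pos_right (qW_gt j) (pow_pos hfac 2)]

theorem stmt_11 (m n : ℕ) (hm : 1 ≤ m) (hn : 1 ≤ n) :
    2 / Real.sqrt (n * (m + n)) <
      (Real.Gamma (n / 2) * Real.Gamma ((m + n) / 2)) /
        (Real.Gamma ((n + 1) / 2) * Real.Gamma ((m + n + 1) / 2)) ∧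
    (Real.Gamma (n / 2) * Real.Gamma ((m + n) / 2)) /
        (Real.Gamma ((n + 1) / 2) * Real.Gamma ((m + n + 1) / 2)) <
      2 / Real.sqrt ((n - 1 / 2) * (m + n - 1 / 2)) := by
  have hn1 : (1:ℝ) ≤ (n:ℝ) := by exact_mod_cast hn
  have hm1 : (1:ℝ) ≤ (m:ℝ) := by exact_mod_cast hm
  set x : ℝ := (n:ℝ) with hx
  set y : ℝ := (m:ℝ) + (n:ℝ) with hy
  have hy1 : (2:ℝ) ≤ y := by simp [hy]; linarith
  have hxpos : (0:ℝ) < x := by linarith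
  have hypos : (0:ℝ) < y := by linarith
  have hA : (0:ℝ) < Real.Gamma (x/2) := Real.Gamma_pos_of_pos (by positivity)
  have hB : (0:ℝ) < Real.Gamma ((x+1)/2) := Real.Gamma_pos_of_pos (by positivity)
  have hC : (0:ℝ) < Real.Gamma (y/2) := Real.Gamma_pos_of_pos (by positivity)
  have hD : (0:ℝ) < Real.Gamma ((y+1)/2) := Real.Gamma_pos_of_pos (by positivity)
  have hu1 : Real.Gamma ((x+1)/2)^2 < (x/2) * Real.Gamma (x/2)^2 := key_upper n hn
  have hl1 : (x/2 - 1/4) * Real.Gamma (x/2)^2 < Real.Gamma ((x+1)/2)^2 := key_lower n hn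
  have hmn : 1 ≤ m + n := by omega
  have hu2 : Real.Gamma ((y+1)/2)^2 < (y/2) * Real.Gamma (y/2)^2 := by
    have := key_upper (m + n) hmn
    push_cast at this
    convert this using 3 <;> rw [hy]
  have hl2 : (y/2 - 1/4) * Real.Gamma (y/2)^2 < Real.Gamma ((y+1)/2)^2 := by
    have := key_lower (m + n) hmn
    push_cast at this
    convert this using 3 <;> rw [hy]
  constructor
  · -- lower bound
    have hcast : ((n:ℝ)) * ((m:ℝ) + (n:ℝ)) = x * y := by rw [hx, hy]
    rw [show Real.Gamma ((n:ℝ)/2) = Real.Gamma (x/2) from rfl]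
    have hs : (0:ℝ) < Real.sqrt (x * y) := Real.sqrt_pos.mpr (by positivity)
    rw [div_lt_div_iff₀ hs (mul_pos hB hD)]
    have hsq : (2 * (Real.Gamma ((x+1)/2) * Real.Gamma ((y+1)/2)))^2
        < (Real.Gamma (x/2) * Real.Gamma (y/2) * Real.sqrt (x * y))^2 := by
      have hss : Real.sqrt (x*y)^2 = x*y := Real.sq_sqrt (by positivity)
      have hmul := mul_lt_mul'' hu1 hu2 (sq_nonneg (Real.Gamma ((x+1)/2))) (sq_nonneg (Real.Gamma ((y+1)/2)))
      calc (2 * (Real.Gamma ((x+1)/2) * Real.Gamma ((y+1)/2)))^2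
          = 4 * (Real.Gamma ((x+1)/2)^2 * Real.Gamma ((y+1)/2)^2) := by ring
        _ < 4 * ((x/2 * Real.Gamma (x/2)^2) * (y/2 * Real.Gamma (y/2)^2)) := by linarith
        _ = (Real.Gamma (x/2) * Real.Gamma (y/2))^2 * (x * y) := by ring
        _ = (Real.Gamma (x/2) * Real.Gamma (y/2))^2 * Real.sqrt (x*y)^2 := by rw [hss]
        _ = (Real.Gamma (x/2) * Real.Gamma (y/2) * Real.sqrt (x*y))^2 := by ring
    have := lt_of_pow_lt_pow_left₀ 2 (by positivity) hsq
    linarith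
  · -- upper bound
    have hs : (0:ℝ) < Real.sqrt ((x - 1/2) * (y - 1/2)) := by
      apply Real.sqrt_pos.mpr
      nlinarith
    rw [div_lt_div_iff₀ (mul_pos hB hD) hs]
    have hsq : (Real.Gamma (x/2) * Real.Gamma (y/2) * Real.sqrt ((x - 1/2) * (y - 1/2)))^2
        < (2 * (Real.Gamma ((x+1)/2) * Real.Gamma ((y+1)/2)))^2 := by
      have hss : Real.sqrt ((x - 1/2) * (y - 1/2))^2 = (x - 1/2) * (y - 1/2) :=
        Real.sq_sqrt (by nlinarith)
      have hmul := mul_lt_mul'' hl1 hl2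
        (by nlinarith [sq_nonneg (Real.Gamma (x/2))] : (0:ℝ) ≤ (x/2 - 1/4) * Real.Gamma (x/2)^2)
        (by nlinarith [sq_nonneg (Real.Gamma (y/2))] : (0:ℝ) ≤ (y/2 - 1/4) * Real.Gamma (y/2)^2)
      calc (Real.Gamma (x/2) * Real.Gamma (y/2) * Real.sqrt ((x - 1/2) * (y - 1/2)))^2
          = (Real.Gamma (x/2) * Real.Gamma (y/2))^2 * Real.sqrt ((x - 1/2) * (y - 1/2))^2 := by ring
        _ = (Real.Gamma (x/2) * Real.Gamma (y/2))^2 * ((x - 1/2) * (y - 1/2)) := by rw [hss]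
        _ = 4 * (((x/2 - 1/4) * Real.Gamma (x/2)^2) * ((y/2 - 1/4) * Real.Gamma (y/2)^2)) := by ring
        _ < 4 * (Real.Gamma ((x+1)/2)^2 * Real.Gamma ((y+1)/2)^2) := by linarith
        _ = (2 * (Real.Gamma ((x+1)/2) * Real.Gamma ((y+1)/2)))^2 := by ring
    have := lt_of_pow_lt_pow_left₀ 2 (by positivity) hsq
    linarith
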